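/- Let X be a nonnegative random variable with values in (0,1] whose distribution function satisfies Pr{X ≤ x} ≥ 1 − (1 − c x^{m})^{L} for all x ∈ [0, c^{−1/m}], where 0 < c ≤ 1, m ≥ 1 is an integer, and L ≥ 1. Then E[−log X] ≥ (1/m) ∑_{k=1}^{L} C(L,k)(−1)^{k+1} c^k / k, and consequently E[−log X] ≥ (log L + log c)/m. -/

import Mathlib

open MeasureTheory Real Set Filter Topology

private lemma expand_sum (L : ℕ) (u : ℝ) :
    ∑ k ∈ Finset.Icc 1 L, (L.choose k : ℝ) * (-1)^(k+1) * u^k = 1 - (1-u)^L := by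
  have hpow : (1-u)^L = ∑ k ∈ Finset.range (L+1), (-u)^k * (1:ℝ)^(L-k) * L.choose k := by
    rw [← add_pow]; ring_nf
  rw [hpow, Finset.sum_range_succ', ← Finset.Ico_add_one_right_eq_Icc, Finset.sum_Ico_eq_sum_range]
  simp only [Nat.succ_sub_one, pow_zero, one_pow, Nat.choose_zero_right, Nat.cast_one, mul_one,
    one_mul]
  rw [sub_add_eq_sub_sub, sub_right_comm, sub_self, zero_sub, ← Finset.sum_neg_distrib]
  refine Finset.sum_congr rfl fun i _ => ?_
  rw [add_comm 1 i, neg_pow, neg_pow]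
  ring

private lemma p_eq_geom (L : ℕ) (hL : 1 ≤ L) (u : ℝ) :
    ∑ k ∈ Finset.Icc 1 L, (L.choose k : ℝ) * (-1)^(k+1) * u^(k-1)
      = ∑ j ∈ Finset.range L, (1-u)^j := by
  rcases eq_or_ne u 0 with rfl | hu
  · rw [Finset.sum_eq_single 1]
    · simp [hL]
    · intro k hk hk1
      have h2 : 2 ≤ k := by
        rcases Finset.mem_Icc.mp hk with ⟨h1, _⟩; omega
      rw [zero_pow (by omega)]; ring
    · intro h; simp at h; omega
  · have key : u * ∑ k ∈ Finset.Icc 1 L, (L.choose k : ℝ) * (-1)^(k+1) * u^(k-1)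
        = u * ∑ j ∈ Finset.range L, (1-u)^j := by
      rw [Finset.mul_sum, Finset.mul_sum]
      have lhs : ∑ k ∈ Finset.Icc 1 L, u * ((L.choose k : ℝ) * (-1)^(k+1) * u^(k-1))
          = ∑ k ∈ Finset.Icc 1 L, (L.choose k : ℝ) * (-1)^(k+1) * u^k := by
        refine Finset.sum_congr rfl fun k hk => ?_
        have h1 := (Finset.mem_Icc.mp hk).1
        have hk' : k - 1 + 1 = k := by omega
        calc u * ((L.choose k : ℝ) * (-1)^(k+1) * u^(k-1))
            = (L.choose k : ℝ) * (-1)^(k+1) * (u^(k-1) * u) := by ring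
          _ = _ := by rw [← pow_succ, hk']
      have h2 : ∑ j ∈ Finset.range L, u * (1-u)^j
          = (∑ i ∈ Finset.range L, (1-u)^i) * u := by
        rw [Finset.sum_mul]
        exact Finset.sum_congr rfl fun j _ => by ring
      rw [lhs, expand_sum, h2]
      linear_combination geom_sum_mul (1-u) L
    exact mul_left_cancel₀ hu key

private lemma integral_p (L : ℕ) (c : ℝ) :
    ∫ u in (0:ℝ)..c, (∑ k ∈ Finset.Icc 1 L, (L.choose k : ℝ) * (-1)^(k+1) * u^(k-1))
      = ∑ k ∈ Finset.Icc 1 L, (L.choose k : ℝ) * (-1)^(k+1) * c^k / k := by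
  rw [intervalIntegral.integral_finset_sum]
  · refine Finset.sum_congr rfl fun k hk => ?_
    have h1 : 1 ≤ k := (Finset.mem_Icc.mp hk).1
    rw [intervalIntegral.integral_const_mul, integral_pow]
    rw [show k - 1 + 1 = k by omega]
    rw [zero_pow (by omega), Nat.cast_sub h1]
    push_cast
    ring
  · intro k _
    exact (intervalIntegral.intervalIntegrable_pow (k-1)).const_mul _

private lemma integral_p_one (L : ℕ) (hL : 1 ≤ L) :
    ∫ u in (0:ℝ)..1, (∑ k ∈ Finset.Icc 1 L, (L.choose k : ℝ) * (-1)^(k+1) * u^(k-1))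
      = (harmonic L : ℝ) := by
  have : ∀ u : ℝ, (∑ k ∈ Finset.Icc 1 L, (L.choose k : ℝ) * (-1)^(k+1) * u^(k-1))
      = (fun v => ∑ j ∈ Finset.range L, v^j) (1 - u) := fun u => p_eq_geom L hL u
  simp only [this]
  rw [intervalIntegral.integral_comp_sub_left (fun v => ∑ j ∈ Finset.range L, v^j) 1]
  norm_num
  rw [intervalIntegral.integral_finset_sum]
  · rw [harmonic, Rat.cast_sum]
    refine Finset.sum_congr rfl fun j _ => ?_
    rw [integral_pow]
    push_cast
    norm_num
  · exact fun j _ => intervalIntegral.intervalIntegrable_pow j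

private lemma log_le_S (L : ℕ) (hL : 1 ≤ L) (c : ℝ) (hc0 : 0 < c) (hc1 : c ≤ 1) :
    Real.log L + Real.log c
      ≤ ∑ k ∈ Finset.Icc 1 L, (L.choose k : ℝ) * (-1)^(k+1) * c^k / k := by
  set p : ℝ → ℝ := fun u => ∑ k ∈ Finset.Icc 1 L, (L.choose k : ℝ) * (-1)^(k+1) * u^(k-1)
    with hp
  have hcont : Continuous p := by
    apply continuous_finset_sum
    exact fun k _ => continuous_const.mul (continuous_pow _)
  have hip : ∀ a b : ℝ, IntervalIntegrable p volume a b :=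
    fun a b => hcont.intervalIntegrable a b
  have hsplit : (∫ u in (0:ℝ)..1, p u)
      = (∫ u in (0:ℝ)..c, p u) + ∫ u in c..(1:ℝ), p u :=
    (intervalIntegral.integral_add_adjacent_intervals (hip 0 c) (hip c 1)).symm
  have hmono : (∫ u in c..(1:ℝ), p u) ≤ ∫ u in c..(1:ℝ), u⁻¹ := by
    apply intervalIntegral.integral_mono_on hc1 (hip c 1)
    · exact intervalIntegral.intervalIntegrable_inv (fun u hu => by
        rcases hu with ⟨h1, h2⟩
        simp only [inf_le_iff, le_sup_iff] at h1 h2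
        intro h; subst h; rcases h1 with h | h <;> linarith) continuousOn_id
    · intro u hu
      rcases hu with ⟨hcu, hu1⟩
      have hu0 : 0 < u := lt_of_lt_of_le hc0 hcu
      have hkey : u * p u = 1 - (1-u)^L := by
        rw [hp, Finset.mul_sum]
        have : ∀ k ∈ Finset.Icc 1 L,
            u * ((L.choose k : ℝ) * (-1)^(k+1) * u^(k-1))
              = (L.choose k : ℝ) * (-1)^(k+1) * u^k := by
          intro k hk
          have h1 : 1 ≤ k := (Finset.mem_Icc.mp hk).1
          calc u * ((L.choose k : ℝ) * (-1)^(k+1) * u^(k-1))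
              = (L.choose k : ℝ) * (-1)^(k+1) * (u^(k-1) * u) := by ring
            _ = _ := by rw [← pow_succ, show k - 1 + 1 = k by omega]
        rw [Finset.sum_congr rfl this, expand_sum]
      have hpow : (0:ℝ) ≤ (1-u)^L := pow_nonneg (by linarith) L
      have : u * p u ≤ 1 := by rw [hkey]; linarith
      rw [← one_div]
      rw [le_div_iff₀ hu0]
      linarith [this, mul_comm u (p u)]
  have hinv : (∫ u in c..(1:ℝ), u⁻¹) = - Real.log c := by
    rw [integral_inv (fun hu => by
      rcases hu with ⟨h1, h2⟩
      simp only [inf_le_iff, le_sup_iff] at h1 h2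
      rcases h1 with h | h <;> linarith)]
    rw [one_div, Real.log_inv]
  have h1 : (harmonic L : ℝ) = (∫ u in (0:ℝ)..c, p u) + ∫ u in c..(1:ℝ), p u := by
    rw [← hsplit, integral_p_one L hL]
  have hlog : Real.log L + Real.log c ≤ (harmonic L : ℝ) + Real.log c := by
    have h2 : Real.log L ≤ Real.log (L+1) := by
      apply Real.log_le_log (by exact_mod_cast hL)
      push_cast; linarith
    have h3 := log_add_one_le_harmonic L
    push_cast at h3 ⊢
    linarith
  have h4 : (∫ u in c..(1:ℝ), p u) ≤ - Real.log c := by rw [← hinv]; exact hmono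
  have hfinal : Real.log L + Real.log c ≤ ∫ u in (0:ℝ)..c, p u := by linarith
  exact hfinal.trans_eq (integral_p L c)

private lemma integral_exp_neg_mul_Ioi {b : ℝ} (hb : 0 < b) :
    ∫ x in Ioi (0:ℝ), Real.exp (-b * x) = 1 / b := by
  have hderiv : ∀ x ∈ Ici (0:ℝ),
      HasDerivAt (fun x => -Real.exp (-b * x) / b) (Real.exp (-b * x)) x := by
    intro x _
    have h1 : HasDerivAt (fun x : ℝ => -b * x) (-b) x := by
      simpa using (hasDerivAt_id x).const_mul (-b)
    have h2 := (h1.exp.neg).div_const b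
    convert h2 using 1
    · rfl
    · rfl
    · rfl
    · rw [eq_div_iff hb.ne']; ring
  have htend : Tendsto (fun x => -Real.exp (-b * x) / b) atTop (𝓝 0) := by
    have : Tendsto (fun x => -Real.exp (-b * x) / b) atTop (𝓝 (-0 / b)) := by
      refine Tendsto.div_const (Tendsto.neg ?_) _
      exact tendsto_exp_atBot.comp (tendsto_id.const_mul_atTop_of_neg (by linarith))
    simpa using this
  have := integral_Ioi_of_hasDerivAt_of_tendsto' hderiv
    (exp_neg_integrableOn_Ioi 0 hb) htend
  rw [this]
  norm_num
  rw [neg_div, neg_neg, one_div]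


private lemma h_repr (L m : ℕ) (c : ℝ) : (fun t : ℝ => 1 - (1 - c * (Real.exp (-t))^m)^L)
    = fun t => ∑ k ∈ Finset.Icc 1 L,
        (L.choose k : ℝ)*(-1)^(k+1)*c^k * Real.exp (-((m*k : ℕ) : ℝ) * t) := by
  funext t
  rw [← expand_sum L (c * Real.exp (-t)^m)]
  refine Finset.sum_congr rfl fun k hk => ?_
  rw [mul_pow, ← pow_mul, ← Real.exp_nat_mul]
  ring_nf

private lemma integrable_h (L m : ℕ) (hm : 1 ≤ m) (c : ℝ) :
    IntegrableOn (fun t => 1 - (1 - c * (Real.exp (-t))^m)^L) (Ioi 0) volume := by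
  rw [h_repr L m c]
  refine integrable_finset_sum _ fun k hk => ?_
  have h1 : 1 ≤ k := (Finset.mem_Icc.mp hk).1
  have hb : (0:ℝ) < ((m*k : ℕ) : ℝ) := by
    have : 1 ≤ m * k := Nat.one_le_iff_ne_zero.mpr (by positivity)
    exact_mod_cast Nat.lt_of_lt_of_le Nat.zero_lt_one this
  exact (exp_neg_integrableOn_Ioi 0 hb).const_mul _

private lemma integral_h (L m : ℕ) (hL : 1 ≤ L) (hm : 1 ≤ m) (c : ℝ) :
    ∫ t in Ioi (0:ℝ), (1 - (1 - c * (Real.exp (-t))^m)^L)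
      = (1/(m:ℝ)) * ∑ k ∈ Finset.Icc 1 L, (L.choose k : ℝ) * (-1)^(k+1) * c^k / k := by
  rw [h_repr L m c]
  rw [MeasureTheory.integral_finset_sum]
  · rw [Finset.mul_sum]
    refine Finset.sum_congr rfl fun k hk => ?_
    have h1 : 1 ≤ k := (Finset.mem_Icc.mp hk).1
    have hb : (0:ℝ) < ((m*k : ℕ) : ℝ) := by
      have : 1 ≤ m * k := Nat.one_le_iff_ne_zero.mpr (by positivity)
      exact_mod_cast Nat.lt_of_lt_of_le Nat.zero_lt_one this
    rw [MeasureTheory.integral_const_mul, integral_exp_neg_mul_Ioi hb]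
    have hm0 : ((m:ℝ)) ≠ 0 := by positivity
    have hk0 : ((k:ℝ)) ≠ 0 := by
      have : 0 < k := h1
      positivity
    push_cast
    field_simp
  · intro k hk
    have h1 : 1 ≤ k := (Finset.mem_Icc.mp hk).1
    have hb : (0:ℝ) < ((m*k : ℕ) : ℝ) := by
      have : 1 ≤ m * k := Nat.one_le_iff_ne_zero.mpr (by positivity)
      exact_mod_cast Nat.lt_of_lt_of_le Nat.zero_lt_one this
    exact (exp_neg_integrableOn_Ioi 0 hb).const_mul _

/-- Expectation lower bound from a CDF bound: if Pr{X ≤ x} ≥ 1 − (1 − c xᵐ)ᴸ on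
[0, c^{−1/m}] for a (0,1]-valued random variable X, then
E[−log X] ≥ (1/m) ∑_{k=1}^{L} C(L,k)(−1)^{k+1} cᵏ/k ≥ (log L + log c)/m. -/
theorem stmt_6 {Ω : Type*} [MeasurableSpace Ω] (μ : Measure Ω) [IsProbabilityMeasure μ]
    (X : Ω → ℝ) (hX : Measurable X)
    (hrange : ∀ᵐ ω ∂μ, 0 < X ω ∧ X ω ≤ 1)
    (c : ℝ) (hc0 : 0 < c) (hc1 : c ≤ 1) (m L : ℕ) (hm : 1 ≤ m) (hL : 1 ≤ L)
    (hcdf : ∀ x : ℝ, x ∈ Set.Icc 0 (c ^ (-(1 : ℝ) / m)) →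
      1 - (1 - c * x ^ m) ^ L ≤ (μ {ω | X ω ≤ x}).toReal)
    (hint : Integrable (fun ω => -Real.log (X ω)) μ) :
    (1 / (m : ℝ)) * ∑ k ∈ Finset.Icc 1 L, (L.choose k : ℝ) * (-1) ^ (k + 1) * c ^ k / k
        ≤ ∫ ω, -Real.log (X ω) ∂μ ∧
    (Real.log L + Real.log c) / m ≤ ∫ ω, -Real.log (X ω) ∂μ := by
  set S := ∑ k ∈ Finset.Icc 1 L, (L.choose k : ℝ) * (-1) ^ (k + 1) * c ^ k / k with hS
  set f : Ω → ℝ := fun ω => -Real.log (X ω) with hf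
  have f_nn : 0 ≤ᵐ[μ] f := by
    filter_upwards [hrange] with ω hω
    have := Real.log_nonpos hω.1.le hω.2
    simp only [hf, Pi.zero_apply]
    linarith
  have f_meas : Measurable f := (Real.measurable_log.comp hX).neg
  have key1 : ∫ ω, f ω ∂μ = (∫⁻ ω, ENNReal.ofReal (f ω) ∂μ).toReal :=
    integral_eq_lintegral_of_nonneg_ae f_nn f_meas.aestronglyMeasurable
  have layer : ∫⁻ ω, ENNReal.ofReal (f ω) ∂μ = ∫⁻ t in Ioi 0, μ {ω | t ≤ f ω} :=
    lintegral_eq_lintegral_meas_le μ f_nn f_meas.aemeasurable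
  have hpt : ∀ t ∈ Ioi (0:ℝ),
      ENNReal.ofReal (1 - (1 - c * (Real.exp (-t))^m)^L) ≤ μ {ω | t ≤ f ω} := by
    intro t ht
    have ht0 : 0 < t := ht
    have hmem : Real.exp (-t) ∈ Set.Icc 0 (c ^ (-(1:ℝ)/m)) := by
      constructor
      · exact (Real.exp_pos _).le
      · have h1 : Real.exp (-t) ≤ 1 := Real.exp_le_one_iff.mpr (by linarith)
        have hmpos : (0:ℝ) < m := by exact_mod_cast hm
        have h2 : (1:ℝ) ≤ c ^ (-(1:ℝ)/m) :=
          Real.one_le_rpow_of_pos_of_le_one_of_nonpos hc0 hc1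
            (div_nonpos_of_nonpos_of_nonneg (by norm_num) hmpos.le)
        linarith
    have hb := hcdf (Real.exp (-t)) hmem
    have hsub : μ {ω | X ω ≤ Real.exp (-t)} ≤ μ {ω | t ≤ f ω} := by
      apply measure_mono_ae
      filter_upwards [hrange] with ω hω hle
      have hlog : Real.log (X ω) ≤ Real.log (Real.exp (-t)) :=
        Real.log_le_log hω.1 hle
      rw [Real.log_exp] at hlog
      show t ≤ -Real.log (X ω)
      linarith
    calc ENNReal.ofReal (1 - (1 - c * (Real.exp (-t))^m)^L)
        ≤ ENNReal.ofReal ((μ {ω | X ω ≤ Real.exp (-t)}).toReal) :=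
          ENNReal.ofReal_le_ofReal hb
      _ = μ {ω | X ω ≤ Real.exp (-t)} := ENNReal.ofReal_toReal (measure_ne_top μ _)
      _ ≤ _ := hsub
  have h_nonneg : 0 ≤ᵐ[volume.restrict (Ioi (0:ℝ))]
      fun t => 1 - (1 - c * (Real.exp (-t))^m)^L := by
    filter_upwards [ae_restrict_mem measurableSet_Ioi] with t ht
    have h1 : (0:ℝ) < Real.exp (-t) := Real.exp_pos _
    have h2 : Real.exp (-t) ≤ 1 := Real.exp_le_one_iff.mpr (by linarith [mem_Ioi.mp ht])
    have hu0 : (0:ℝ) ≤ c * Real.exp (-t)^m := by positivity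
    have hu1 : c * Real.exp (-t)^m ≤ 1 := by
      calc c * Real.exp (-t)^m ≤ 1 * 1 :=
        mul_le_mul hc1 (pow_le_one₀ h1.le h2) (by positivity) (by norm_num)
      _ = 1 := by norm_num
    have : (1 - c * Real.exp (-t)^m)^L ≤ 1 := pow_le_one₀ (by linarith) (by linarith)
    simp only [Pi.zero_apply]
    linarith
  have hOf : ENNReal.ofReal ((1/(m:ℝ)) * S)
      = ∫⁻ t in Ioi (0:ℝ), ENNReal.ofReal (1 - (1 - c * (Real.exp (-t))^m)^L) := by
    rw [← integral_h L m hL hm c]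
    exact ofReal_integral_eq_lintegral_ofReal (integrable_h L m hm c) h_nonneg
  have hle2 : (∫⁻ t in Ioi (0:ℝ), ENNReal.ofReal (1 - (1 - c * (Real.exp (-t))^m)^L))
      ≤ ∫⁻ t in Ioi (0:ℝ), μ {ω | t ≤ f ω} :=
    lintegral_mono_ae ((ae_restrict_iff' measurableSet_Ioi).mpr (ae_of_all _ hpt))
  have hfin : (∫⁻ ω, ENNReal.ofReal (f ω) ∂μ) ≠ ⊤ := by
    have h := hint.2
    rw [hasFiniteIntegral_iff_ofReal f_nn] at h
    exact h.ne
  have main : (1/(m:ℝ)) * S ≤ ∫ ω, f ω ∂μ := by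
    rw [key1]
    refine (ENNReal.ofReal_le_iff_le_toReal hfin).mp ?_
    calc ENNReal.ofReal ((1/(m:ℝ)) * S)
        = ∫⁻ t in Ioi (0:ℝ), ENNReal.ofReal (1 - (1 - c * (Real.exp (-t))^m)^L) := hOf
      _ ≤ ∫⁻ t in Ioi (0:ℝ), μ {ω | t ≤ f ω} := hle2
      _ = ∫⁻ ω, ENNReal.ofReal (f ω) ∂μ := layer.symm
  refine ⟨main, ?_⟩
  have hSlog := log_le_S L hL c hc0 hc1
  have hmpos : (0:ℝ) < m := by exact_mod_cast hm
  calc (Real.log L + Real.log c)/m = (1/(m:ℝ)) * (Real.log L + Real.log c) := by ring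
    _ ≤ (1/(m:ℝ)) * S := mul_le_mul_of_nonneg_left hSlog (by positivity)
    _ ≤ _ := main
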